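/- Let X be a compact metrizable abelian topological group (written multiplicatively), let α ∈ X be such that {α^n : n ∈ ℤ} is dense in X, and let T : X → X be the homeomorphism x ↦ α·x (a minimal rotation). Then 𝒫 = {(x, s·x, t·x, s·t·x) : x,s,t ∈ X} and 𝒬 = {(x, s·x, t·x, s·t·x, u·x, s·u·x, t·u·x, s·t·u·x) : x,s,t,u ∈ X}. -/

import Mathlib

open Filter Topology

/-- The `n`-th iterate (`n : ℤ`) of a homeomorphism `T : X → X`. -/
def iterZ {X : Type*} [TopologicalSpace X] (T : X ≃ₜ X) (n : ℤ) : X → X :=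
  fun x => (T.toEquiv ^ n) x

section Defs

variable {X : Type*} [TopologicalSpace X]

/-- The set of parallelograms `𝒫`: the closure in `X⁴` of
`{(x, Tᵐx, Tⁿx, Tᵐ⁺ⁿx) : x ∈ X, m, n ∈ ℤ}`. -/
def Para (T : X ≃ₜ X) : Set (X × X × X × X) :=
  closure {q | ∃ (x : X) (m n : ℤ),
    q = (x, iterZ T m x, iterZ T n x, iterZ T (m + n) x)}

/-- The set of parallelepipeds `𝒬`: the closure in `X⁸ = X⁴ × X⁴` of
`{(x, Tᵐx, Tⁿx, Tᵐ⁺ⁿx, Tᵖx, Tᵐ⁺ᵖx, Tⁿ⁺ᵖx, Tᵐ⁺ⁿ⁺ᵖx) : x ∈ X, m, n, p ∈ ℤ}`. -/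
def Pip (T : X ≃ₜ X) : Set ((X × X × X × X) × (X × X × X × X)) :=
  closure {q | ∃ (x : X) (m n p : ℤ),
    q = ((x, iterZ T m x, iterZ T n x, iterZ T (m + n) x),
         (iterZ T p x, iterZ T (m + p) x, iterZ T (n + p) x, iterZ T (m + n + p) x))}

end Defs

section MetricDefs

variable {X : Type*} [MetricSpace X]

/-- `(X, T)` is transitive: some point has dense orbit `{Tⁿx : n ∈ ℤ}`. -/
def IsTransitive (T : X ≃ₜ X) : Prop :=
  ∃ x : X, Dense (Set.range fun n : ℤ => iterZ T n x)

/-- `(X, T)` is minimal: every point has dense orbit. -/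
def IsMinimal (T : X ≃ₜ X) : Prop :=
  ∀ x : X, Dense (Set.range fun n : ℤ => iterZ T n x)

/-- `(x, y)` is a proximal pair: `inf_{n ∈ ℤ} d(Tⁿx, Tⁿy) = 0`. -/
def ProximalPair (T : X ≃ₜ X) (x y : X) : Prop :=
  ⨅ n : ℤ, dist (iterZ T n x) (iterZ T n y) = 0

/-- `(X, T)` is distal: every pair of distinct points is distal,
i.e. `inf_{n ∈ ℤ} d(Tⁿx, Tⁿy) > 0`. -/
def IsDistal (T : X ≃ₜ X) : Prop :=
  ∀ x y : X, x ≠ y → 0 < ⨅ n : ℤ, dist (iterZ T n x) (iterZ T n y)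

/-- The regionally proximal relation `RP`. -/
def RP (T : X ≃ₜ X) (x y : X) : Prop :=
  ∀ ε > 0, ∃ x' y' : X, ∃ n : ℤ,
    dist x' x < ε ∧ dist y' y < ε ∧ dist (iterZ T n x') (iterZ T n y') < ε

/-- The doubly regionally proximal relation `RP²`. -/
def RP2 (T : X ≃ₜ X) (x y : X) : Prop :=
  ∀ ε > 0, ∃ x' y' : X, ∃ m n : ℤ,
    dist x' x < ε ∧ dist y' y < ε ∧
    dist (iterZ T m x') (iterZ T m y') < ε ∧
    dist (iterZ T n x') (iterZ T n y') < ε ∧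
    dist (iterZ T (m + n) x') (iterZ T (m + n) y') < ε

/-- The strongly doubly regionally proximal relation `RP²ₛ`. -/
def RP2S (T : X ≃ₜ X) (x y : X) : Prop :=
  ∀ ε > 0, ∃ x' y' : X, ∃ m n : ℤ,
    dist x' x < ε ∧ dist y' y < ε ∧
    dist (iterZ T m x') y < ε ∧ dist (iterZ T n x') y < ε ∧
    dist (iterZ T (m + n) x') y < ε ∧
    dist (iterZ T m y') y < ε ∧ dist (iterZ T n y') y < ε ∧
    dist (iterZ T (m + n) y') y < ε

end MetricDefs

/-- For a minimal rotation on a compact metrizable abelian group,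
`𝒫 = {(x, sx, tx, stx)}` and `𝒬 = {(x, sx, tx, stx, ux, sux, tux, stux)}`. -/
theorem stmt19 {X : Type*} [TopologicalSpace X] [CompactSpace X]
    [TopologicalSpace.MetrizableSpace X] [Nonempty X]
    [CommGroup X] [IsTopologicalGroup X]
    (α : X) (hα : Dense (Set.range fun n : ℤ => α ^ n)) :
    Para (Homeomorph.mulLeft α) =
      {q : X × X × X × X | ∃ x s t : X, q = (x, s * x, t * x, s * t * x)} ∧
    Pip (Homeomorph.mulLeft α) =
      {q : (X × X × X × X) × (X × X × X × X) | ∃ x s t u : X,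
        q = ((x, s * x, t * x, s * t * x),
             (u * x, s * u * x, t * u * x, s * t * u * x))} := by
  have hit : ∀ (n : ℤ) (x : X), iterZ (Homeomorph.mulLeft α) n x = α ^ n * x := by
    intro n x; simp [iterZ, Homeomorph.mulLeft]
  constructor
  · -- Para
    set g : X × X × X → X × X × X × X :=
      fun p => (p.1, p.2.1 * p.1, p.2.2 * p.1, p.2.1 * p.2.2 * p.1) with hg
    have hgc : Continuous g := by fun_prop
    have hT : {q : X × X × X × X | ∃ x s t : X, q = (x, s * x, t * x, s * t * x)}
        = Set.range g := by
      ext q; constructor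
      · rintro ⟨x, s, t, rfl⟩; exact ⟨(x, s, t), rfl⟩
      · rintro ⟨⟨x, s, t⟩, rfl⟩; exact ⟨x, s, t, rfl⟩
    have hTc : IsClosed {q : X × X × X × X | ∃ x s t : X, q = (x, s * x, t * x, s * t * x)} := by
      rw [hT, ← Set.image_univ]
      exact (isCompact_univ.image hgc).isClosed
    apply le_antisymm
    · apply closure_minimal _ hTc
      rintro q ⟨x, m, n, rfl⟩
      exact ⟨x, α ^ m, α ^ n, by simp [hit, zpow_add, mul_assoc]⟩
    · rintro q ⟨x, s, t, rfl⟩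
      have hD : Dense ((Set.range fun n : ℤ => α ^ n) ×ˢ (Set.range fun n : ℤ => α ^ n)) :=
        hα.prod hα
      have hc : Continuous (fun p : X × X => (x, p.1 * x, p.2 * x, p.1 * p.2 * x)) := by fun_prop
      have hm : Set.MapsTo (fun p : X × X => (x, p.1 * x, p.2 * x, p.1 * p.2 * x))
          ((Set.range fun n : ℤ => α ^ n) ×ˢ (Set.range fun n : ℤ => α ^ n))
          {q : X × X × X × X | ∃ (y : X) (m n : ℤ),
            q = (y, iterZ (Homeomorph.mulLeft α) m y, iterZ (Homeomorph.mulLeft α) n y,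
              iterZ (Homeomorph.mulLeft α) (m + n) y)} := by
        rintro ⟨a, b⟩ ⟨⟨m, rfl⟩, ⟨n, rfl⟩⟩
        exact ⟨x, m, n, by simp [hit, zpow_add, mul_assoc]⟩
      exact hm.closure hc (hD (s, t))
  · -- Pip
    set g : X × X × X × X → (X × X × X × X) × (X × X × X × X) :=
      fun p => ((p.1, p.2.1 * p.1, p.2.2.1 * p.1, p.2.1 * p.2.2.1 * p.1),
        (p.2.2.2 * p.1, p.2.1 * p.2.2.2 * p.1, p.2.2.1 * p.2.2.2 * p.1,
          p.2.1 * p.2.2.1 * p.2.2.2 * p.1)) with hg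
    have hgc : Continuous g := by fun_prop
    have hT : {q : (X × X × X × X) × (X × X × X × X) | ∃ x s t u : X,
        q = ((x, s * x, t * x, s * t * x),
             (u * x, s * u * x, t * u * x, s * t * u * x))} = Set.range g := by
      ext q; constructor
      · rintro ⟨x, s, t, u, rfl⟩; exact ⟨(x, s, t, u), rfl⟩
      · rintro ⟨⟨x, s, t, u⟩, rfl⟩; exact ⟨x, s, t, u, rfl⟩
    have hTc : IsClosed {q : (X × X × X × X) × (X × X × X × X) | ∃ x s t u : X,
        q = ((x, s * x, t * x, s * t * x),
             (u * x, s * u * x, t * u * x, s * t * u * x))} := by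
      rw [hT, ← Set.image_univ]
      exact (isCompact_univ.image hgc).isClosed
    apply le_antisymm
    · apply closure_minimal _ hTc
      rintro q ⟨x, m, n, p, rfl⟩
      exact ⟨x, α ^ m, α ^ n, α ^ p, by simp [hit, zpow_add, mul_assoc]⟩
    · rintro q ⟨x, s, t, u, rfl⟩
      have hD : Dense ((Set.range fun n : ℤ => α ^ n) ×ˢ
          ((Set.range fun n : ℤ => α ^ n) ×ˢ (Set.range fun n : ℤ => α ^ n))) :=
        hα.prod (hα.prod hα)
      have hc : Continuous (fun p : X × X × X => ((x, p.1 * x, p.2.1 * x, p.1 * p.2.1 * x),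
        (p.2.2 * x, p.1 * p.2.2 * x, p.2.1 * p.2.2 * x, p.1 * p.2.1 * p.2.2 * x))) := by fun_prop
      have hm : Set.MapsTo (fun p : X × X × X => ((x, p.1 * x, p.2.1 * x, p.1 * p.2.1 * x),
          (p.2.2 * x, p.1 * p.2.2 * x, p.2.1 * p.2.2 * x, p.1 * p.2.1 * p.2.2 * x)))
          ((Set.range fun n : ℤ => α ^ n) ×ˢ
            ((Set.range fun n : ℤ => α ^ n) ×ˢ (Set.range fun n : ℤ => α ^ n)))
          {q : (X × X × X × X) × (X × X × X × X) | ∃ (y : X) (m n p : ℤ),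
            q = ((y, iterZ (Homeomorph.mulLeft α) m y, iterZ (Homeomorph.mulLeft α) n y,
                iterZ (Homeomorph.mulLeft α) (m + n) y),
              (iterZ (Homeomorph.mulLeft α) p y, iterZ (Homeomorph.mulLeft α) (m + p) y,
                iterZ (Homeomorph.mulLeft α) (n + p) y,
                iterZ (Homeomorph.mulLeft α) (m + n + p) y))} := by
        rintro ⟨a, b, c⟩ ⟨⟨m, rfl⟩, ⟨n, rfl⟩, ⟨p, rfl⟩⟩
        exact ⟨x, m, n, p, by simp [hit, zpow_add, mul_assoc]⟩
      exact hm.closure hc (hD (s, t, u))
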